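/- Let V be a real vector space, κ a symmetric bilinear form on V, and D : V → V a linear map that is κ-skew-symmetric, i.e. κ(Dx,y) = −κ(x,Dy) for all x,y ∈ V. On g := ℝ × V × ℝ define the bracket [(z,v,t),(z′,v′,t′)] := (κ(Dv,v′), t·Dv′ − t′·Dv, 0) and the symmetric bilinear form κ_g((z,x,t),(z′,x′,t′)) := z·t′ + z′·t + κ(x,x′). Then κ_g is invariant under the bracket: κ_g([a,b],c) + κ_g(b,[a,c]) = 0 for all a,b,c ∈ g. -/
import Mathlib


/-- The bracket of the double extension `g(V,κ,D) = ℝ × V × ℝ`. -/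
def doubleExtBracket {V : Type*} [AddCommGroup V] [Module ℝ V]
    (κ : V →ₗ[ℝ] V →ₗ[ℝ] ℝ) (D : V →ₗ[ℝ] V)
    (p q : ℝ × V × ℝ) : ℝ × V × ℝ :=
  (κ (D p.2.1) q.2.1, p.2.2 • D q.2.1 - q.2.2 • D p.2.1, 0)

/-- The Lorentzian form `κ_g` on the double extension `g(V,κ,D) = ℝ × V × ℝ`. -/
def doubleExtForm {V : Type*} [AddCommGroup V] [Module ℝ V]
    (κ : V →ₗ[ℝ] V →ₗ[ℝ] ℝ) (p q : ℝ × V × ℝ) : ℝ :=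
  p.1 * q.2.2 + q.1 * p.2.2 + κ p.2.1 q.2.1

/-- For a symmetric bilinear form `κ` on a real vector space `V` and a
`κ`-skew-symmetric linear map `D`, the Lorentzian form `κ_g` on the double extension
`g(V,κ,D)` is invariant under the bracket: `κ_g([a,b],c) + κ_g(b,[a,c]) = 0`. -/
theorem doubleExtForm_invariant
    {V : Type*} [AddCommGroup V] [Module ℝ V]
    (κ : V →ₗ[ℝ] V →ₗ[ℝ] ℝ) (hsymm : ∀ x y : V, κ x y = κ y x)
    (D : V →ₗ[ℝ] V) (hskew : ∀ x y : V, κ (D x) y = -κ x (D y)) :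
    ∀ a b c : ℝ × V × ℝ,
      doubleExtForm κ (doubleExtBracket κ D a b) c
        + doubleExtForm κ b (doubleExtBracket κ D a c) = 0 := by
  rintro ⟨z1,x1,t1⟩ ⟨z2,x2,t2⟩ ⟨z3,x3,t3⟩
  simp only [doubleExtForm, doubleExtBracket, map_sub, map_smul, LinearMap.sub_apply,
    LinearMap.smul_apply, smul_eq_mul]
  have h1 := hskew x1 x2
  have h2 := hskew x1 x3
  have h3 := hsymm x2 (D x1)
  have h4 := hsymm x3 (D x1)
  have h5 := hsymm (D x2) x3
  have h6 := hskew x2 x3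
  linear_combination t1 * h6 - t3 * h3
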